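/- Let k be a field and a < b, c < d in ℝ. The first graded Tor of interval modules satisfies Tor₁^gr(k[a,b), k[c,d)) ≅ k[max{a+d, b+c}, b+d). Moreover Tor₁^gr(k[a,b), k(−∞,d)) ≅ k[a+d, b+d) and Tor₁^gr(k[a,∞), k[c,d)) = 0. -/

import Mathlib

open CategoryTheory

noncomputable section
attribute [local instance] Classical.propDecidable
set_option linter.unusedSectionVars false

variable (R : Type) [Ring R] {P : Type} [Preorder P]

/-- Condition that a subset is order-convex. -/
def IsConvexSet (I : Set P) : Prop := ∀ ⦃x y z : P⦄, x ∈ I → z ∈ I → x ≤ y → y ≤ z → y ∈ I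

/-- The value of the interval persistence module at a point. -/
def intervalObj (I : Set P) (a : P) : Submodule R R :=
  if a ∈ I then (⊤ : Submodule R R) else ⊥

lemma intervalObj_eq_zero {I : Set P} {a : P} (h : a ∉ I) (x : intervalObj R I a) :
    x = 0 := by
  have hx := x.2
  simp only [intervalObj, if_neg h, Submodule.mem_bot] at hx
  exact Subtype.ext hx

/-- The structure map of the interval module between two degrees. -/
def intervalMapAux (I : Set P) (a b : P) :
    (intervalObj R I a) →ₗ[R] (intervalObj R I b) :=
  if h : a ∈ I ∧ b ∈ I then
    Submodule.inclusion (by simp [intervalObj, h.1, h.2])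
  else 0

lemma intervalMapAux_coe {I : Set P} {a b : P} (ha : a ∈ I) (hb : b ∈ I)
    (x : intervalObj R I a) : ((intervalMapAux R I a b x : R)) = (x : R) := by
  simp [intervalMapAux, ha, hb]

lemma intervalMapAux_of_not {I : Set P} {a b : P} (h : ¬(a ∈ I ∧ b ∈ I))
    (x : intervalObj R I a) : intervalMapAux R I a b x = 0 := by
  simp [intervalMapAux, h]

/-- The interval (indicator) persistence module of a convex set `I`,
as a functor from the preorder `P` to `R`-modules. -/
def intervalModule (I : Set P) (hI : IsConvexSet I) : P ⥤ ModuleCat R where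
  obj a := ModuleCat.of R (intervalObj R I a)
  map {a b} f := ModuleCat.ofHom (intervalMapAux R I a b)
  map_id a := by
    ext x : 2
    by_cases h : a ∈ I
    · exact Subtype.ext (intervalMapAux_coe R h h x)
    · rw [intervalObj_eq_zero R h x]
      simp
  map_comp {a b c} f g := by
    ext x : 2
    show intervalMapAux R I a c x = intervalMapAux R I b c (intervalMapAux R I a b x)
    by_cases ha : a ∈ I
    · by_cases hc : c ∈ I
      · have hb : b ∈ I := hI ha hc (leOfHom f) (leOfHom g)
        apply Subtype.ext
        rw [intervalMapAux_coe R ha hc, intervalMapAux_coe R hb hc,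
          intervalMapAux_coe R ha hb]
      · rw [intervalMapAux_of_not R (fun h => hc h.2),
          intervalMapAux_of_not R (fun h => hc h.2)]
    · rw [intervalObj_eq_zero R ha x]
      simp

end

lemma IsConvexSet.of_ordConnected {P : Type} [Preorder P] {s : Set P}
    (h : s.OrdConnected) : IsConvexSet s :=
  fun _ _ _ hx hz hxy hyz => h.out hx hz ⟨hxy, hyz⟩

open CategoryTheory Limits

noncomputable section
variable (k : Type) [Field k]

/-- The index poset `{(s,t) | s + t ≤ r}` for the graded tensor product. -/
abbrev SumLe (r : ℝ) : Type := {p : ℝ × ℝ // p.1 + p.2 ≤ r}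

lemma SumLe.le1 {r : ℝ} {p q : SumLe r} (h : p ≤ q) : p.1.1 ≤ q.1.1 := h.1
lemma SumLe.le2 {r : ℝ} {p q : SumLe r} (h : p ≤ q) : p.1.2 ≤ q.1.2 := h.2

/-- The diagram `(s,t) ↦ M_s ⊗ N_t` over `{(s,t) | s + t ≤ r}` whose colimit is the
degree-`r` piece of the graded tensor product `M ⊗_gr N`. -/
def grDiagram (M N : ℝ ⥤ ModuleCat k) (r : ℝ) : SumLe r ⥤ ModuleCat k where
  obj p := ModuleCat.of k (TensorProduct k (M.obj p.1.1) (N.obj p.1.2))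
  map {p q} f :=
    ModuleCat.ofHom (TensorProduct.map (M.map (homOfLE (SumLe.le1 (leOfHom f)))).hom
      (N.map (homOfLE (SumLe.le2 (leOfHom f)))).hom)
  map_id p := by
    apply ModuleCat.hom_ext
    dsimp
    rw [M.map_id, N.map_id]
    exact TensorProduct.map_id
  map_comp {p q s} f g := by
    apply ModuleCat.hom_ext
    dsimp
    rw [show (homOfLE (SumLe.le1 (leOfHom (f ≫ g))) : p.1.1 ⟶ s.1.1) =
        homOfLE (SumLe.le1 (leOfHom f)) ≫ homOfLE (SumLe.le1 (leOfHom g)) from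
        Subsingleton.elim _ _,
      show (homOfLE (SumLe.le2 (leOfHom (f ≫ g))) : p.1.2 ⟶ s.1.2) =
        homOfLE (SumLe.le2 (leOfHom f)) ≫ homOfLE (SumLe.le2 (leOfHom g)) from
        Subsingleton.elim _ _,
      M.map_comp, N.map_comp]
    exact (TensorProduct.map_comp _ _ _ _)

/-- The structure-map cocone: the degree-`r` diagram mapping into the degree-`r'` colimit. -/
def grCocone (M N : ℝ ⥤ ModuleCat k) {r r' : ℝ} (h : r ≤ r') :
    Cocone (grDiagram k M N r) where
  pt := colimit (grDiagram k M N r')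
  ι :=
    { app := fun j => colimit.ι (grDiagram k M N r') ⟨j.1, j.2.trans h⟩
      naturality := fun j j' f => by
        dsimp
        exact (colimit.w (grDiagram k M N r')
          (homOfLE (show (⟨j.1, j.2.trans h⟩ : SumLe r') ≤ ⟨j'.1, j'.2.trans h⟩ from
            leOfHom f))).trans (Category.comp_id _).symm }

/-- The graded-module tensor product of one-parameter persistence modules:
`(M ⊗_gr N)_r = colim_{s+t ≤ r} (M_s ⊗ N_t)`, with structure maps induced by
inclusions of index posets. -/
def grTensor (M N : ℝ ⥤ ModuleCat k) : ℝ ⥤ ModuleCat k where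
  obj r := colimit (grDiagram k M N r)
  map {r r'} f := colimit.desc (grDiagram k M N r) (grCocone k M N (leOfHom f))
  map_id r := by
    apply colimit.hom_ext
    intro j
    rw [colimit.ι_desc]
    exact (Category.comp_id _).symm
  map_comp {r r' r''} f g := by
    apply colimit.hom_ext
    intro j
    simp [grCocone]
    exact (colimit.ι_desc (grCocone k M N (leOfHom g)) ⟨j.1, j.2.trans (leOfHom f)⟩).symm

end

open CategoryTheory Limits

noncomputable section
variable (k : Type) [Field k]

/-- The map of degree-`r` tensor diagrams induced by a morphism in the left variable. -/
def grDiagramMapLeft {M M' : ℝ ⥤ ModuleCat k} (φ : M ⟶ M') (N : ℝ ⥤ ModuleCat k)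
    (r : ℝ) : grDiagram k M N r ⟶ grDiagram k M' N r where
  app p := ModuleCat.ofHom (TensorProduct.map (φ.app p.1.1).hom LinearMap.id)
  naturality {p q} f := by
    apply ModuleCat.hom_ext
    apply TensorProduct.ext'
    intro x y
    have h1 := LinearMap.congr_fun (congrArg ModuleCat.Hom.hom (φ.naturality (homOfLE (SumLe.le1 (leOfHom f))))) x
    simp only [ModuleCat.hom_comp, LinearMap.comp_apply] at h1
    show TensorProduct.map (φ.app q.1.1).hom LinearMap.id
        (TensorProduct.map (M.map (homOfLE (SumLe.le1 (leOfHom f)))).hom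
          (N.map (homOfLE (SumLe.le2 (leOfHom f)))).hom (x ⊗ₜ[k] y)) =
      TensorProduct.map (M'.map (homOfLE (SumLe.le1 (leOfHom f)))).hom
        (N.map (homOfLE (SumLe.le2 (leOfHom f)))).hom
        (TensorProduct.map (φ.app p.1.1).hom LinearMap.id (x ⊗ₜ[k] y))
    simp [TensorProduct.map_tmul, h1]

/-- The map of degree-`r` tensor diagrams induced by a morphism in the right variable. -/
def grDiagramMapRight (M : ℝ ⥤ ModuleCat k) {N N' : ℝ ⥤ ModuleCat k} (φ : N ⟶ N')
    (r : ℝ) : grDiagram k M N r ⟶ grDiagram k M N' r where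
  app p := ModuleCat.ofHom (TensorProduct.map LinearMap.id (φ.app p.1.2).hom)
  naturality {p q} f := by
    apply ModuleCat.hom_ext
    apply TensorProduct.ext'
    intro x y
    have h1 := LinearMap.congr_fun (congrArg ModuleCat.Hom.hom (φ.naturality (homOfLE (SumLe.le2 (leOfHom f))))) y
    simp only [ModuleCat.hom_comp, LinearMap.comp_apply] at h1
    show TensorProduct.map LinearMap.id (φ.app q.1.2).hom
        (TensorProduct.map (M.map (homOfLE (SumLe.le1 (leOfHom f)))).hom
          (N.map (homOfLE (SumLe.le2 (leOfHom f)))).hom (x ⊗ₜ[k] y)) =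
      TensorProduct.map (M.map (homOfLE (SumLe.le1 (leOfHom f)))).hom
        (N'.map (homOfLE (SumLe.le2 (leOfHom f)))).hom
        (TensorProduct.map LinearMap.id (φ.app p.1.2).hom (x ⊗ₜ[k] y))
    simp [TensorProduct.map_tmul, h1]

/-- Functoriality of the graded tensor product in the left variable. -/
def grTensorMapLeft {M M' : ℝ ⥤ ModuleCat k} (φ : M ⟶ M') (N : ℝ ⥤ ModuleCat k) :
    grTensor k M N ⟶ grTensor k M' N where
  app r := colimMap (grDiagramMapLeft k φ N r)
  naturality {r r'} f := by
    apply colimit.hom_ext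
    intro j
    show colimit.ι (grDiagram k M N r) j ≫
        colimit.desc (grDiagram k M N r) (grCocone k M N (leOfHom f)) ≫
        colimMap (grDiagramMapLeft k φ N r') =
      colimit.ι (grDiagram k M N r) j ≫
        colimMap (grDiagramMapLeft k φ N r) ≫
        colimit.desc (grDiagram k M' N r) (grCocone k M' N (leOfHom f))
    simp [grCocone]
    exact ι_colimMap _ _

/-- Functoriality of the graded tensor product in the right variable. -/
def grTensorMapRight (M : ℝ ⥤ ModuleCat k) {N N' : ℝ ⥤ ModuleCat k} (φ : N ⟶ N') :
    grTensor k M N ⟶ grTensor k M N' where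
  app r := colimMap (grDiagramMapRight k M φ r)
  naturality {r r'} f := by
    apply colimit.hom_ext
    intro j
    show colimit.ι (grDiagram k M N r) j ≫
        colimit.desc (grDiagram k M N r) (grCocone k M N (leOfHom f)) ≫
        colimMap (grDiagramMapRight k M φ r') =
      colimit.ι (grDiagram k M N r) j ≫
        colimMap (grDiagramMapRight k M φ r) ≫
        colimit.desc (grDiagram k M N' r) (grCocone k M N' (leOfHom f))
    simp [grCocone]
    exact ι_colimMap _ _

end

open CategoryTheory

noncomputable section
attribute [local instance] Classical.propDecidable
set_option linter.unusedSectionVars false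
variable (R : Type) [Ring R] {P : Type} [Preorder P]

/-- The degreewise component of a morphism between interval modules. -/
def intervalCross (I J : Set P) (a : P) :
    (intervalObj R I a) →ₗ[R] (intervalObj R J a) :=
  if h : a ∈ I ∧ a ∈ J then
    Submodule.inclusion (by simp [intervalObj, h.1, h.2])
  else 0

lemma intervalCross_coe {I J : Set P} {a : P} (hI : a ∈ I) (hJ : a ∈ J)
    (x : intervalObj R I a) : ((intervalCross R I J a x : R)) = (x : R) := by
  simp [intervalCross, hI, hJ]

lemma intervalCross_of_not {I J : Set P} {a : P} (h : ¬(a ∈ I ∧ a ∈ J))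
    (x : intervalObj R I a) : intervalCross R I J a x = 0 := by
  simp [intervalCross, h]

/-- The canonical morphism of interval persistence modules, whose component at a point
in `I ∩ J` is the identity of `R` and which is zero elsewhere.  The hypothesis `hcond`
is exactly the condition making this family of maps natural. -/
def intervalHom (I J : Set P) (hI : IsConvexSet I) (hJ : IsConvexSet J)
    (hcond : ∀ ⦃x y : P⦄, x ≤ y → x ∈ I → y ∈ J → (y ∈ I ↔ x ∈ J)) :
    intervalModule R I hI ⟶ intervalModule R J hJ where
  app a := ModuleCat.ofHom (intervalCross R I J a)
  naturality {a b} f := by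
    ext x : 2
    change ↥(intervalObj R I a) at x
    show intervalCross R I J b (intervalMapAux R I a b x) =
      intervalMapAux R J a b (intervalCross R I J a x)
    by_cases ha : a ∈ I
    · by_cases hbJ : b ∈ J
      · have hiff := hcond (leOfHom f) ha hbJ
        by_cases hbI : b ∈ I
        · have haJ : a ∈ J := hiff.mp hbI
          apply Subtype.ext
          rw [intervalCross_coe R hbI hbJ, intervalMapAux_coe R ha hbI,
            intervalMapAux_coe R haJ hbJ, intervalCross_coe R ha haJ]
        · have haJ : a ∉ J := fun h => hbI (hiff.mpr h)
          rw [intervalCross_of_not R (fun h => hbI h.1),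
            intervalCross_of_not R (fun h => haJ h.2)]
          simp
      · rw [intervalCross_of_not R (fun h => hbJ h.2),
          intervalMapAux_of_not R (fun h => hbJ h.2)]
    · rw [intervalObj_eq_zero R ha x]
      simp

end


noncomputable section TorHelpers
open CategoryTheory Limits
attribute [local instance] Classical.propDecidable
set_option linter.unusedSectionVars false
set_option maxHeartbeats 1000000

variable (k : Type) [Field k]

/-- The element of an interval module given by a scalar, at a degree in the set. -/
def unitTo (S : Set ℝ) (r : ℝ) (hr : r ∈ S) : k →ₗ[k] intervalObj k S r where
  toFun x := ⟨x, by simp [intervalObj, hr]⟩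
  map_add' x y := rfl
  map_smul' c x := rfl

lemma unitTo_val (S : Set ℝ) (r : ℝ) (hr : r ∈ S) (x : k) :
    (unitTo k S r hr x : k) = x := rfl

/-- Contraction of a tensor product of interval-module fibers into scalars. -/
def contractMap (I J : Set ℝ) (s t : ℝ) :
    TensorProduct k (intervalObj k I s) (intervalObj k J t) →ₗ[k] k :=
  (TensorProduct.lift (LinearMap.mul k k)).comp
    (TensorProduct.map (intervalObj k I s).subtype (intervalObj k J t).subtype)

lemma contractMap_tmul (I J : Set ℝ) (s t : ℝ) (x : intervalObj k I s)
    (y : intervalObj k J t) :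
    contractMap k I J s t (x ⊗ₜ y) = (x : k) * (y : k) := rfl

/-- The generator of the tensor product of interval fibers. -/
def genHom (I J : Set ℝ) {s t : ℝ} (hs : s ∈ I) (ht : t ∈ J) :
    k →ₗ[k] TensorProduct k (intervalObj k I s) (intervalObj k J t) :=
  ((TensorProduct.mk k _ _).flip (unitTo k J t ht 1)).comp (unitTo k I s hs)

lemma genHom_apply (I J : Set ℝ) {s t : ℝ} (hs : s ∈ I) (ht : t ∈ J) (c : k) :
    genHom k I J hs ht c = (unitTo k I s hs c) ⊗ₜ[k] (unitTo k J t ht 1) := rfl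

lemma genHom_contract (I J : Set ℝ) {s t : ℝ} (hs : s ∈ I) (ht : t ∈ J)
    (z : TensorProduct k (intervalObj k I s) (intervalObj k J t)) :
    genHom k I J hs ht (contractMap k I J s t z) = z := by
  have h : (genHom k I J hs ht).comp (contractMap k I J s t) = LinearMap.id := by
    apply TensorProduct.ext'
    intro x y
    have hx : (unitTo k I s hs ((x : k) * (y : k))) = (y : k) • x :=
      Subtype.ext (by simp [unitTo_val, mul_comm])
    have hy : ((y : k) • (unitTo k J t ht 1)) = y := Subtype.ext (by simp [unitTo_val])
    show genHom k I J hs ht (contractMap k I J s t (x ⊗ₜ y)) = x ⊗ₜ y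
    rw [contractMap_tmul, genHom_apply, hx, TensorProduct.smul_tmul, hy]
  exact LinearMap.congr_fun h z

lemma tensor_zero_of_not (I J : Set ℝ) {s t : ℝ} (h : s ∉ I ∨ t ∉ J)
    (z : TensorProduct k (intervalObj k I s) (intervalObj k J t)) : z = 0 := by
  induction z using TensorProduct.induction_on with
  | zero => rfl
  | tmul x y =>
    rcases h with h | h
    · rw [intervalObj_eq_zero k h x, TensorProduct.zero_tmul]
    · rw [intervalObj_eq_zero k h y, TensorProduct.tmul_zero]
  | add a b ha hb => rw [ha, hb, add_zero]

/-- Hypotheses on a triple of sets making `interval I ⊗gr interval J ≅ interval K`. -/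
structure TensorData (I J K : Set ℝ) : Prop where
  minI : ∀ {s s' : ℝ}, s ∈ I → s' ∈ I → min s s' ∈ I
  minJ : ∀ {t t' : ℝ}, t ∈ J → t' ∈ J → min t t' ∈ J
  kill : ∀ {r : ℝ} {p q : SumLe r}, p ≤ q → p.1.1 ∈ I → p.1.2 ∈ J →
      ¬(q.1.1 ∈ I ∧ q.1.2 ∈ J) → r ∉ K
  nonemp : ∀ {r : ℝ}, r ∈ K → ∃ p : SumLe r, p.1.1 ∈ I ∧ p.1.2 ∈ J
  escape : ∀ {r : ℝ}, r ∉ K → ∀ {p : SumLe r}, p.1.1 ∈ I → p.1.2 ∈ J →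
      ∃ p₀ q : SumLe r, p₀ ≤ p ∧ p₀ ≤ q ∧ p₀.1.1 ∈ I ∧ p₀.1.2 ∈ J ∧
        ¬(q.1.1 ∈ I ∧ q.1.2 ∈ J)
  up : ∀ {r r' : ℝ}, r ≤ r' → r' ∈ K → ∀ {p : SumLe r}, p.1.1 ∈ I → p.1.2 ∈ J → r ∈ K

end TorHelpers
noncomputable section TensorIsoSection
open CategoryTheory Limits
attribute [local instance] Classical.propDecidable
set_option linter.unusedSectionVars false
set_option maxHeartbeats 1000000

variable (k : Type) [Field k]
variable (I J K : Set ℝ) (hI : IsConvexSet I) (hJ : IsConvexSet J) (hK : IsConvexSet K)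

/-- The diagram whose colimit is the degree-`r` piece of the tensor of interval modules. -/
abbrev intD (r : ℝ) : SumLe r ⥤ ModuleCat k :=
  grDiagram k (intervalModule k I hI) (intervalModule k J hJ) r

lemma intD_map_tmul {r : ℝ} {p q : SumLe r} (f : p ⟶ q)
    (x : intervalObj k I p.1.1) (y : intervalObj k J p.1.2) :
    (intD k I J hI hJ r).map f (x ⊗ₜ y) =
      (intervalMapAux k I p.1.1 q.1.1 x) ⊗ₜ (intervalMapAux k J p.1.2 q.1.2 y) := rfl

lemma intD_map_gen {r : ℝ} {p q : SumLe r} (hpq : p ≤ q)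
    (hp1 : p.1.1 ∈ I) (hp2 : p.1.2 ∈ J) (hq1 : q.1.1 ∈ I) (hq2 : q.1.2 ∈ J) (c : k) :
    (intD k I J hI hJ r).map (homOfLE hpq) (genHom k I J hp1 hp2 c) =
      genHom k I J hq1 hq2 c := by
  rw [genHom_apply]
  erw [intD_map_tmul]
  rw [genHom_apply]
  congr 1
  · exact Subtype.ext (intervalMapAux_coe k hp1 hq1 _)
  · exact Subtype.ext (intervalMapAux_coe k hp2 hq2 _)

lemma iota_gen_step {r : ℝ} {p q : SumLe r} (hpq : p ≤ q)
    (hp1 : p.1.1 ∈ I) (hp2 : p.1.2 ∈ J) (hq1 : q.1.1 ∈ I) (hq2 : q.1.2 ∈ J) (c : k) :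
    colimit.ι (intD k I J hI hJ r) p (genHom k I J hp1 hp2 c) =
      colimit.ι (intD k I J hI hJ r) q (genHom k I J hq1 hq2 c) := by
  have h := LinearMap.congr_fun (congrArg ModuleCat.Hom.hom (colimit.w (intD k I J hI hJ r) (homOfLE hpq)))
    (genHom k I J hp1 hp2 c)
  rw [← h]
  show colimit.ι (intD k I J hI hJ r) q
      ((intD k I J hI hJ r).map (homOfLE hpq) (genHom k I J hp1 hp2 c)) = _
  rw [intD_map_gen k I J hI hJ hpq hp1 hp2 hq1 hq2 c]

lemma iota_gen_connect (hD : TensorData I J K) {r : ℝ} {p q : SumLe r}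
    (hp1 : p.1.1 ∈ I) (hp2 : p.1.2 ∈ J) (hq1 : q.1.1 ∈ I) (hq2 : q.1.2 ∈ J) (c : k) :
    colimit.ι (intD k I J hI hJ r) p (genHom k I J hp1 hp2 c) =
      colimit.ι (intD k I J hI hJ r) q (genHom k I J hq1 hq2 c) := by
  have hsum : min p.1.1 q.1.1 + min p.1.2 q.1.2 ≤ r :=
    le_trans (add_le_add (min_le_left _ _) (min_le_left _ _)) p.2
  set low : SumLe r := ⟨(min p.1.1 q.1.1, min p.1.2 q.1.2), hsum⟩ with hlow
  have hlp : low ≤ p := ⟨min_le_left _ _, min_le_left _ _⟩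
  have hlq : low ≤ q := ⟨min_le_right _ _, min_le_right _ _⟩
  have h1 : low.1.1 ∈ I := hD.minI hp1 hq1
  have h2 : low.1.2 ∈ J := hD.minJ hp2 hq2
  rw [← iota_gen_step k I J hI hJ hlp h1 h2 hp1 hp2 c,
    ← iota_gen_step k I J hI hJ hlq h1 h2 hq1 hq2 c]

lemma iota_zero_of_not {r : ℝ} {p : SumLe r} (h : ¬(p.1.1 ∈ I ∧ p.1.2 ∈ J))
    (z : (intD k I J hI hJ r).obj p) : colimit.ι (intD k I J hI hJ r) p z = 0 := by
  have hz : z = 0 := tensor_zero_of_not k I J (not_and_or.mp h) z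
  rw [hz, map_zero]

lemma iota_gen_kill (hD : TensorData I J K) {r : ℝ} {p : SumLe r} (hr : r ∉ K)
    (hp1 : p.1.1 ∈ I) (hp2 : p.1.2 ∈ J) (c : k) :
    colimit.ι (intD k I J hI hJ r) p (genHom k I J hp1 hp2 c) = 0 := by
  obtain ⟨p₀, q, h0p, h0q, h01, h02, hq⟩ := hD.escape hr hp1 hp2
  rw [← iota_gen_step k I J hI hJ h0p h01 h02 hp1 hp2 c]
  have h := LinearMap.congr_fun (congrArg ModuleCat.Hom.hom (colimit.w (intD k I J hI hJ r) (homOfLE h0q)))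
    (genHom k I J h01 h02 c)
  rw [← h]
  show colimit.ι (intD k I J hI hJ r) q
      ((intD k I J hI hJ r).map (homOfLE h0q) (genHom k I J h01 h02 c)) = 0
  exact iota_zero_of_not k I J hI hJ hq _

/-- The contraction leg of the cocone computing the tensor colimit. -/
def contractLeg (r : ℝ) (p : SumLe r) :
    (intD k I J hI hJ r).obj p ⟶ (intervalModule k K hK).obj r :=
  if hr : r ∈ K then
    ModuleCat.ofHom ((unitTo k K r hr).comp (contractMap k I J p.1.1 p.1.2))
  else 0

lemma contractLeg_pos {r : ℝ} (hr : r ∈ K) (p : SumLe r)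
    (z : (intD k I J hI hJ r).obj p) :
    contractLeg k I J K hI hJ hK r p z =
      unitTo k K r hr (contractMap k I J p.1.1 p.1.2 z) := by
  rw [show contractLeg k I J K hI hJ hK r p =
      ModuleCat.ofHom ((unitTo k K r hr).comp (contractMap k I J p.1.1 p.1.2)) from dif_pos hr]; rfl

lemma contractLeg_neg {r : ℝ} (hr : r ∉ K) (p : SumLe r)
    (z : (intD k I J hI hJ r).obj p) :
    contractLeg k I J K hI hJ hK r p z = 0 := by
  rw [show contractLeg k I J K hI hJ hK r p = 0 from dif_neg hr]; rfl

/-- The contraction cocone. -/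
def contractCocone (hD : TensorData I J K) (r : ℝ) : Cocone (intD k I J hI hJ r) where
  pt := (intervalModule k K hK).obj r
  ι :=
    { app := contractLeg k I J K hI hJ hK r
      naturality := fun p q f => by
        simp only [Functor.const_obj_map, Category.comp_id]
        apply ModuleCat.hom_ext
        apply TensorProduct.ext'
        intro x y
        show contractLeg k I J K hI hJ hK r q ((intD k I J hI hJ r).map f (x ⊗ₜ y)) =
          contractLeg k I J K hI hJ hK r p (x ⊗ₜ y)
        by_cases hr : r ∈ K
        · erw [contractLeg_pos k I J K hI hJ hK hr, contractLeg_pos k I J K hI hJ hK hr,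
            intD_map_tmul]
          congr 1
          erw [contractMap_tmul, contractMap_tmul]
          by_cases hp1 : p.1.1 ∈ I
          · by_cases hp2 : p.1.2 ∈ J
            · by_cases hq : q.1.1 ∈ I ∧ q.1.2 ∈ J
              · erw [intervalMapAux_coe k hp1 hq.1, intervalMapAux_coe k hp2 hq.2]
              · exact absurd hr (hD.kill (leOfHom f) hp1 hp2 hq)
            · rw [intervalObj_eq_zero k hp2 y]
              simp
          · rw [intervalObj_eq_zero k hp1 x]
            simp
        · erw [contractLeg_neg k I J K hI hJ hK hr, contractLeg_neg k I J K hI hJ hK hr] }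

/-- Contraction map from the tensor colimit to the interval module. -/
def descMap (hD : TensorData I J K) (r : ℝ) :
    colimit (intD k I J hI hJ r) ⟶ (intervalModule k K hK).obj r :=
  colimit.desc _ (contractCocone k I J K hI hJ hK hD r)

/-- Inverse to the contraction map. -/
def invMap (hD : TensorData I J K) (r : ℝ) :
    (intervalModule k K hK).obj r ⟶ colimit (intD k I J hI hJ r) :=
  if hr : r ∈ K then
    ModuleCat.ofHom
      ((genHom k I J (hD.nonemp hr).choose_spec.1 (hD.nonemp hr).choose_spec.2).comp
        (intervalObj k K r).subtype) ≫
      colimit.ι (intD k I J hI hJ r) (hD.nonemp hr).choose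
  else 0

lemma invMap_pos (hD : TensorData I J K) {r : ℝ} (hr : r ∈ K) (x : intervalObj k K r) :
    invMap k I J K hI hJ hK hD r x =
      colimit.ι (intD k I J hI hJ r) (hD.nonemp hr).choose
        (genHom k I J (hD.nonemp hr).choose_spec.1 (hD.nonemp hr).choose_spec.2
          ((intervalObj k K r).subtype x)) := by
  simp only [invMap, dif_pos hr]; rfl

lemma descMap_iota (hD : TensorData I J K) {r : ℝ} (p : SumLe r) (z : (intD k I J hI hJ r).obj p) :
    descMap k I J K hI hJ hK hD r (colimit.ι (intD k I J hI hJ r) p z) =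
      contractLeg k I J K hI hJ hK r p z :=
  LinearMap.congr_fun (congrArg ModuleCat.Hom.hom (colimit.ι_desc (contractCocone k I J K hI hJ hK hD r) p)) z

end TensorIsoSection
noncomputable section TensorIsoSection2
open CategoryTheory Limits
attribute [local instance] Classical.propDecidable
set_option linter.unusedSectionVars false
set_option maxHeartbeats 1000000

variable (k : Type) [Field k]
variable (I J K : Set ℝ) (hI : IsConvexSet I) (hJ : IsConvexSet J) (hK : IsConvexSet K)

lemma contract_genHom {s t : ℝ} (hs : s ∈ I) (ht : t ∈ J) (c : k) :
    contractMap k I J s t (genHom k I J hs ht c) = c := by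
  rw [genHom_apply, contractMap_tmul, unitTo_val, unitTo_val, mul_one]

lemma tensor_hom_inv (hD : TensorData I J K) (r : ℝ) :
    descMap k I J K hI hJ hK hD r ≫ invMap k I J K hI hJ hK hD r =
      𝟙 (colimit (intD k I J hI hJ r)) := by
  apply colimit.hom_ext
  intro p
  rw [Category.comp_id]
  apply ModuleCat.hom_ext
  apply LinearMap.ext
  intro z
  show invMap k I J K hI hJ hK hD r
      (descMap k I J K hI hJ hK hD r (colimit.ι (intD k I J hI hJ r) p z)) =
    colimit.ι (intD k I J hI hJ r) p z
  by_cases hp : p.1.1 ∈ I ∧ p.1.2 ∈ J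
  · have hz := genHom_contract k I J hp.1 hp.2 z
    by_cases hr : r ∈ K
    · rw [descMap_iota, contractLeg_pos k I J K hI hJ hK hr, invMap_pos k I J K hI hJ hK hD hr]
      have hc : (intervalObj k K r).subtype
          (unitTo k K r hr (contractMap k I J p.1.1 p.1.2 z)) =
          contractMap k I J p.1.1 p.1.2 z := rfl
      rw [hc]
      conv_rhs => rw [← hz]
      exact iota_gen_connect k I J K hI hJ hD (hD.nonemp hr).choose_spec.1
        (hD.nonemp hr).choose_spec.2 hp.1 hp.2 _
    · rw [descMap_iota, contractLeg_neg k I J K hI hJ hK hr, map_zero]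
      conv_rhs => rw [← hz]
      exact (iota_gen_kill k I J K hI hJ hD hr hp.1 hp.2 _).symm
  · rw [iota_zero_of_not k I J hI hJ hp z, map_zero, map_zero]

lemma tensor_inv_hom (hD : TensorData I J K) (r : ℝ) :
    invMap k I J K hI hJ hK hD r ≫ descMap k I J K hI hJ hK hD r =
      𝟙 ((intervalModule k K hK).obj r) := by
  apply ModuleCat.hom_ext
  apply LinearMap.ext
  intro x
  show descMap k I J K hI hJ hK hD r (invMap k I J K hI hJ hK hD r x) = x
  by_cases hr : r ∈ K
  · erw [invMap_pos k I J K hI hJ hK hD hr, descMap_iota,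
      contractLeg_pos k I J K hI hJ hK hr, contract_genHom]
    exact Subtype.ext rfl
  · have hx : x = 0 := intervalObj_eq_zero k hr x
    rw [hx, map_zero, map_zero]

lemma descMap_natural (hD : TensorData I J K) {r r' : ℝ} (f : r ⟶ r') :
    (grTensor k (intervalModule k I hI) (intervalModule k J hJ)).map f ≫
        descMap k I J K hI hJ hK hD r' =
      descMap k I J K hI hJ hK hD r ≫ (intervalModule k K hK).map f := by
  apply colimit.hom_ext
  intro p
  rw [show (grTensor k (intervalModule k I hI) (intervalModule k J hJ)).map f =
      colimit.desc (intD k I J hI hJ r)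
        (grCocone k (intervalModule k I hI) (intervalModule k J hJ) (leOfHom f)) from rfl]
  erw [colimit.ι_desc_assoc]
  rw [show ((grCocone k (intervalModule k I hI) (intervalModule k J hJ) (leOfHom f)).ι.app p :
      _ ⟶ _) = colimit.ι (intD k I J hI hJ r') ⟨p.1, p.2.trans (leOfHom f)⟩ from rfl]
  rw [show descMap k I J K hI hJ hK hD r' =
      colimit.desc _ (contractCocone k I J K hI hJ hK hD r') from rfl]
  erw [colimit.ι_desc]
  rw [show descMap k I J K hI hJ hK hD r =
      colimit.desc _ (contractCocone k I J K hI hJ hK hD r) from rfl]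
  erw [colimit.ι_desc_assoc]
  apply ModuleCat.hom_ext
  apply TensorProduct.ext'
  intro x y
  show contractLeg k I J K hI hJ hK r' ⟨p.1, p.2.trans (leOfHom f)⟩ (x ⊗ₜ y) =
    intervalMapAux k K r r' (contractLeg k I J K hI hJ hK r p (x ⊗ₜ y))
  by_cases hr' : r' ∈ K
  · by_cases hr : r ∈ K
    · erw [contractLeg_pos k I J K hI hJ hK hr', contractLeg_pos k I J K hI hJ hK hr]
      apply Subtype.ext
      erw [intervalMapAux_coe k hr hr']
      rw [unitTo_val, unitTo_val]
    · erw [contractLeg_pos k I J K hI hJ hK hr', contractLeg_neg k I J K hI hJ hK hr, map_zero]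
      apply Subtype.ext
      erw [unitTo_val, contractMap_tmul]
      by_cases hp1 : p.1.1 ∈ I
      · by_cases hp2 : p.1.2 ∈ J
        · exact absurd (hD.up (leOfHom f) hr' hp1 hp2) hr
        · rw [intervalObj_eq_zero k hp2 y]; simp
      · rw [intervalObj_eq_zero k hp1 x]; simp
  · erw [contractLeg_neg k I J K hI hJ hK hr',
      intervalMapAux_of_not k (fun h => hr' h.2)]
    rfl

/-- The graded tensor product of interval modules is an interval module. -/
def tensorIntervalIso (hD : TensorData I J K) :
    grTensor k (intervalModule k I hI) (intervalModule k J hJ) ≅ intervalModule k K hK :=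
  NatIso.ofComponents
    (fun r =>
      { hom := descMap k I J K hI hJ hK hD r
        inv := invMap k I J K hI hJ hK hD r
        hom_inv_id := tensor_hom_inv k I J K hI hJ hK hD r
        inv_hom_id := tensor_inv_hom k I J K hI hJ hK hD r })
    (fun f => descMap_natural k I J K hI hJ hK hD f)

lemma tensorIntervalIso_hom_app (hD : TensorData I J K) (r : ℝ) :
    (tensorIntervalIso k I J K hI hJ hK hD).hom.app r = descMap k I J K hI hJ hK hD r := rfl

end TensorIsoSection2
noncomputable section SquareSection
open CategoryTheory Limits
attribute [local instance] Classical.propDecidable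
set_option linter.unusedSectionVars false
set_option maxHeartbeats 1000000

variable (k : Type) [Field k]

lemma square_left (I I' J K K' : Set ℝ) (hI : IsConvexSet I) (hI' : IsConvexSet I')
    (hJ : IsConvexSet J) (hK : IsConvexSet K) (hK' : IsConvexSet K')
    (hD : TensorData I J K) (hD' : TensorData I' J K')
    (hcond : ∀ ⦃x y : ℝ⦄, x ≤ y → x ∈ I → y ∈ I' → (y ∈ I ↔ x ∈ I'))
    (hcondK : ∀ ⦃x y : ℝ⦄, x ≤ y → x ∈ K → y ∈ K' → (y ∈ K ↔ x ∈ K'))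
    (hsub : I ⊆ I')
    (himp : ∀ {r s t : ℝ}, s ∈ I → t ∈ J → s + t ≤ r → r ∈ K' → r ∈ K) :
    grTensorMapLeft k (intervalHom k I I' hI hI' hcond) (intervalModule k J hJ) ≫
        (tensorIntervalIso k I' J K' hI' hJ hK' hD').hom =
      (tensorIntervalIso k I J K hI hJ hK hD).hom ≫ intervalHom k K K' hK hK' hcondK := by
  apply NatTrans.ext
  funext r
  rw [NatTrans.comp_app, NatTrans.comp_app, tensorIntervalIso_hom_app, tensorIntervalIso_hom_app]
  show colimMap (grDiagramMapLeft k (intervalHom k I I' hI hI' hcond)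
        (intervalModule k J hJ) r) ≫ descMap k I' J K' hI' hJ hK' hD' r =
    descMap k I J K hI hJ hK hD r ≫ ModuleCat.ofHom (intervalCross k K K' r)
  apply colimit.hom_ext
  intro p
  rw [← Category.assoc, ι_colimMap, Category.assoc,
    show descMap k I' J K' hI' hJ hK' hD' r =
      colimit.desc _ (contractCocone k I' J K' hI' hJ hK' hD' r) from rfl]
  erw [colimit.ι_desc]
  rw [show descMap k I J K hI hJ hK hD r =
      colimit.desc _ (contractCocone k I J K hI hJ hK hD r) from rfl]
  erw [colimit.ι_desc_assoc]
  apply ModuleCat.hom_ext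
  apply TensorProduct.ext'
  intro x y
  change intervalObj k I p.1.1 at x
  change intervalObj k J p.1.2 at y
  show contractLeg k I' J K' hI' hJ hK' r p ((intervalCross k I I' p.1.1 x) ⊗ₜ y) =
    intervalCross k K K' r (contractLeg k I J K hI hJ hK r p (x ⊗ₜ y))
  by_cases hr' : r ∈ K'
  · erw [contractLeg_pos k I' J K' hI' hJ hK' hr']
    by_cases hp1 : p.1.1 ∈ I
    · by_cases hp2 : p.1.2 ∈ J
      · have hrK : r ∈ K := himp hp1 hp2 p.2 hr'
        erw [contractLeg_pos k I J K hI hJ hK hrK]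
        apply Subtype.ext
        erw [intervalCross_coe k hrK hr']
        rw [unitTo_val, unitTo_val]
        erw [contractMap_tmul k I' J p.1.1 p.1.2 (intervalCross k I I' p.1.1 x) y,
          contractMap_tmul k I J p.1.1 p.1.2 x y, intervalCross_coe k hp1 (hsub hp1)]
      · have h1 : ((intervalCross k I I' p.1.1 x) ⊗ₜ[k] y :
            TensorProduct k (intervalObj k I' p.1.1) (intervalObj k J p.1.2)) = 0 :=
          tensor_zero_of_not k I' J (Or.inr hp2) _
        have h2 : (x ⊗ₜ[k] y : (intD k I J hI hJ r).obj p) = 0 :=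
          tensor_zero_of_not k I J (Or.inr hp2) _
        erw [h1, h2]
        simp
        exact ((congrArg (intervalCross k K K' r)
          (map_zero (ConcreteCategory.hom (contractLeg k I J K hI hJ hK r p)))).trans (map_zero _)).symm
    · have h1 : ((intervalCross k I I' p.1.1 x) ⊗ₜ[k] y :
          TensorProduct k (intervalObj k I' p.1.1) (intervalObj k J p.1.2)) = 0 := by
        rw [intervalObj_eq_zero k hp1 x, map_zero, TensorProduct.zero_tmul]
      have h2 : (x ⊗ₜ[k] y : (intD k I J hI hJ r).obj p) = 0 :=
        tensor_zero_of_not k I J (Or.inl hp1) _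
      erw [h1, h2]
      simp
      exact ((congrArg (intervalCross k K K' r)
        (map_zero (ConcreteCategory.hom (contractLeg k I J K hI hJ hK r p)))).trans (map_zero _)).symm
  · erw [contractLeg_neg k I' J K' hI' hJ hK' hr',
      intervalCross_of_not k (fun h => hr' h.2)]
    rfl

lemma square_right (I J J' K K' : Set ℝ) (hI : IsConvexSet I) (hJ : IsConvexSet J)
    (hJ' : IsConvexSet J') (hK : IsConvexSet K) (hK' : IsConvexSet K')
    (hD : TensorData I J K) (hD' : TensorData I J' K')
    (hcond : ∀ ⦃x y : ℝ⦄, x ≤ y → x ∈ J → y ∈ J' → (y ∈ J ↔ x ∈ J'))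
    (hcondK : ∀ ⦃x y : ℝ⦄, x ≤ y → x ∈ K → y ∈ K' → (y ∈ K ↔ x ∈ K'))
    (hsub : J ⊆ J')
    (himp : ∀ {r s t : ℝ}, s ∈ I → t ∈ J → s + t ≤ r → r ∈ K' → r ∈ K) :
    grTensorMapRight k (intervalModule k I hI) (intervalHom k J J' hJ hJ' hcond) ≫
        (tensorIntervalIso k I J' K' hI hJ' hK' hD').hom =
      (tensorIntervalIso k I J K hI hJ hK hD).hom ≫ intervalHom k K K' hK hK' hcondK := by
  apply NatTrans.ext
  funext r
  rw [NatTrans.comp_app, NatTrans.comp_app, tensorIntervalIso_hom_app, tensorIntervalIso_hom_app]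
  show colimMap (grDiagramMapRight k (intervalModule k I hI)
        (intervalHom k J J' hJ hJ' hcond) r) ≫ descMap k I J' K' hI hJ' hK' hD' r =
    descMap k I J K hI hJ hK hD r ≫ ModuleCat.ofHom (intervalCross k K K' r)
  apply colimit.hom_ext
  intro p
  rw [← Category.assoc, ι_colimMap, Category.assoc,
    show descMap k I J' K' hI hJ' hK' hD' r =
      colimit.desc _ (contractCocone k I J' K' hI hJ' hK' hD' r) from rfl]
  erw [colimit.ι_desc]
  rw [show descMap k I J K hI hJ hK hD r =
      colimit.desc _ (contractCocone k I J K hI hJ hK hD r) from rfl]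
  erw [colimit.ι_desc_assoc]
  apply ModuleCat.hom_ext
  apply TensorProduct.ext'
  intro x y
  change intervalObj k I p.1.1 at x
  change intervalObj k J p.1.2 at y
  show contractLeg k I J' K' hI hJ' hK' r p (x ⊗ₜ (intervalCross k J J' p.1.2 y)) =
    intervalCross k K K' r (contractLeg k I J K hI hJ hK r p (x ⊗ₜ y))
  by_cases hr' : r ∈ K'
  · erw [contractLeg_pos k I J' K' hI hJ' hK' hr']
    by_cases hp2 : p.1.2 ∈ J
    · by_cases hp1 : p.1.1 ∈ I
      · have hrK : r ∈ K := himp hp1 hp2 p.2 hr'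
        erw [contractLeg_pos k I J K hI hJ hK hrK]
        apply Subtype.ext
        erw [intervalCross_coe k hrK hr']
        rw [unitTo_val, unitTo_val]
        erw [contractMap_tmul k I J' p.1.1 p.1.2 x (intervalCross k J J' p.1.2 y),
          contractMap_tmul k I J p.1.1 p.1.2 x y, intervalCross_coe k hp2 (hsub hp2)]
      · have h1 : (x ⊗ₜ[k] (intervalCross k J J' p.1.2 y) :
            TensorProduct k (intervalObj k I p.1.1) (intervalObj k J' p.1.2)) = 0 :=
          tensor_zero_of_not k I J' (Or.inl hp1) _
        have h2 : (x ⊗ₜ[k] y : (intD k I J hI hJ r).obj p) = 0 :=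
          tensor_zero_of_not k I J (Or.inl hp1) _
        erw [h1, h2]
        simp
        exact ((congrArg (intervalCross k K K' r)
          (map_zero (ConcreteCategory.hom (contractLeg k I J K hI hJ hK r p)))).trans (map_zero _)).symm
    · have h1 : (x ⊗ₜ[k] (intervalCross k J J' p.1.2 y) :
          TensorProduct k (intervalObj k I p.1.1) (intervalObj k J' p.1.2)) = 0 := by
        rw [intervalObj_eq_zero k hp2 y, map_zero, TensorProduct.tmul_zero]
      have h2 : (x ⊗ₜ[k] y : (intD k I J hI hJ r).obj p) = 0 :=
        tensor_zero_of_not k I J (Or.inr hp2) _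
      erw [h1, h2]
      simp
      exact ((congrArg (intervalCross k K K' r)
        (map_zero (ConcreteCategory.hom (contractLeg k I J K hI hJ hK r p)))).trans (map_zero _)).symm
  · erw [contractLeg_neg k I J' K' hI hJ' hK' hr',
      intervalCross_of_not k (fun h => hr' h.2)]
    rfl

end SquareSection
noncomputable section KernelSection
open CategoryTheory Limits
attribute [local instance] Classical.propDecidable
set_option linter.unusedSectionVars false
set_option maxHeartbeats 1000000

variable (k : Type) [Field k]
variable (K K' L : Set ℝ) (hK : IsConvexSet K) (hK' : IsConvexSet K') (hL : IsConvexSet L)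
variable (hcondψ : ∀ ⦃x y : ℝ⦄, x ≤ y → x ∈ K → y ∈ K' → (y ∈ K ↔ x ∈ K'))
variable (hcondι : ∀ ⦃x y : ℝ⦄, x ≤ y → x ∈ L → y ∈ K → (y ∈ L ↔ x ∈ K))

lemma intervalKernel_w (hmem : ∀ r : ℝ, r ∈ L ↔ (r ∈ K ∧ r ∉ K')) :
    intervalHom k L K hL hK hcondι ≫ intervalHom k K K' hK hK' hcondψ = 0 := by
  apply NatTrans.ext
  funext r
  rw [Limits.zero_app]
  apply ModuleCat.hom_ext
  apply LinearMap.ext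
  intro x
  show intervalCross k K K' r (intervalCross k L K r x) = 0
  by_cases hr : r ∈ L
  · exact intervalCross_of_not k (fun h => ((hmem r).mp hr).2 h.2) _
  · rw [intervalObj_eq_zero k hr x, map_zero, map_zero]

lemma fork_app_zero (s : KernelFork (intervalHom k K K' hK hK' hcondψ)) {r : ℝ}
    (hrK : r ∈ K) (hrK' : r ∈ K') (x : s.pt.obj r) : s.ι.app r x = 0 := by
  have hc : s.ι ≫ intervalHom k K K' hK hK' hcondψ = 0 := s.condition
  have h2 := congrArg (fun t => t.app r) hc
  simp only [NatTrans.comp_app, Limits.zero_app] at h2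
  have h3 := LinearMap.congr_fun (congrArg ModuleCat.Hom.hom h2) x
  have h4 : intervalCross k K K' r (s.ι.app r x) = 0 := h3
  have hval := congrArg Subtype.val h4
  erw [intervalCross_coe k hrK hrK'] at hval
  exact Subtype.ext (hval.trans rfl)

/-- The lift for the kernel fork. -/
def kernelLift (hmem : ∀ r : ℝ, r ∈ L ↔ (r ∈ K ∧ r ∉ K'))
    (s : KernelFork (intervalHom k K K' hK hK' hcondψ)) :
    s.pt ⟶ intervalModule k L hL where
  app r := s.ι.app r ≫ ModuleCat.ofHom (intervalCross k K L r)
  naturality := by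
    intro r r' f
    apply ModuleCat.hom_ext
    apply LinearMap.ext
    intro x
    have hnat := LinearMap.congr_fun (congrArg ModuleCat.Hom.hom (s.ι.naturality f)) x
    show intervalCross k K L r' (s.ι.app r' (s.pt.map f x)) =
      intervalMapAux k L r r' (intervalCross k K L r (s.ι.app r x))
    have hnat' : s.ι.app r' (s.pt.map f x) =
        intervalMapAux k K r r' (s.ι.app r x) := hnat
    rw [hnat']
    set u : intervalObj k K r := s.ι.app r x with hu
    by_cases hr' : r' ∈ L
    · by_cases hr : r ∈ L
      · apply Subtype.ext
        rw [intervalCross_coe k (((hmem r').mp hr').1) hr',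
          intervalMapAux_coe k (((hmem r).mp hr).1) (((hmem r').mp hr').1),
          intervalMapAux_coe k hr hr', intervalCross_coe k (((hmem r).mp hr).1) hr]
      · rw [intervalCross_of_not k (fun h => hr h.2) u, map_zero]
        by_cases hrK : r ∈ K
        · have hrK' : r ∈ K' := by
            by_contra hn
            exact hr ((hmem r).mpr ⟨hrK, hn⟩)
          have hu0 : u = 0 := fork_app_zero k K K' hK hK' hcondψ s hrK hrK' x
          rw [hu0, map_zero, map_zero]
        · rw [intervalObj_eq_zero k hrK u, map_zero, map_zero]
    · rw [intervalCross_of_not k (fun h => hr' h.2),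
        intervalMapAux_of_not k (fun h => hr' h.2)]

/-- The inclusion of `interval L` is the kernel of `interval K → interval K'`. -/
def intervalKernelIsLimit (hmem : ∀ r : ℝ, r ∈ L ↔ (r ∈ K ∧ r ∉ K')) :
    IsLimit (KernelFork.ofι (intervalHom k L K hL hK hcondι)
      (intervalKernel_w k K K' L hK hK' hL hcondψ hcondι hmem)) := by
  apply Fork.IsLimit.mk _
    (fun s => kernelLift k K K' L hK hK' hL hcondψ hmem s) ?fac ?uniq
  case fac =>
    intro s
    apply NatTrans.ext
    funext r
    apply ModuleCat.hom_ext
    apply LinearMap.ext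
    intro x
    show intervalCross k L K r (intervalCross k K L r (s.ι.app r x)) = s.ι.app r x
    set u : intervalObj k K r := s.ι.app r x with hu
    by_cases hr : r ∈ L
    · apply Subtype.ext
      rw [intervalCross_coe k hr (((hmem r).mp hr).1),
        intervalCross_coe k (((hmem r).mp hr).1) hr]
    · rw [intervalCross_of_not k (fun h => hr h.2), map_zero]
      by_cases hrK : r ∈ K
      · have hrK' : r ∈ K' := by
          by_contra hn
          exact hr ((hmem r).mpr ⟨hrK, hn⟩)
        exact (fork_app_zero k K K' hK hK' hcondψ s hrK hrK' x).symm
      · exact (intervalObj_eq_zero k hrK u).symm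
  case uniq =>
    intro s m hm
    apply NatTrans.ext
    funext r
    apply ModuleCat.hom_ext
    apply LinearMap.ext
    intro x
    have h1 := congrArg (fun t => t.app r) hm
    simp only [NatTrans.comp_app] at h1
    have h2 := LinearMap.congr_fun (congrArg ModuleCat.Hom.hom h1) x
    show m.app r x = intervalCross k K L r (s.ι.app r x)
    by_cases hr : r ∈ L
    · apply Subtype.ext
      have h4 : intervalCross k L K r (m.app r x) =
          (s.ι.app r x : intervalObj k K r) := h2
      have hval := congrArg Subtype.val h4
      erw [intervalCross_coe k hr (((hmem r).mp hr).1)] at hval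
      erw [intervalCross_coe k (((hmem r).mp hr).1) hr]
      exact hval
    · rw [intervalObj_eq_zero k hr (m.app r x), intervalObj_eq_zero k hr
        (intervalCross k K L r (s.ι.app r x))]

lemma intervalModule_empty_isZero (h : IsConvexSet (∅ : Set ℝ)) :
    IsZero (intervalModule k (∅ : Set ℝ) h) := by
  apply Functor.isZero
  intro r
  have hs : Subsingleton (intervalObj k (∅ : Set ℝ) r) :=
    ⟨fun u v => by
      rw [intervalObj_eq_zero k (Set.notMem_empty r) u,
        intervalObj_eq_zero k (Set.notMem_empty r) v]⟩
  exact @ModuleCat.isZero_of_subsingleton k _ ((intervalModule k (∅ : Set ℝ) h).obj r) hs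

end KernelSection
noncomputable section DataSection
open CategoryTheory Limits

lemma tensorData_Ici_Ico (x e f : ℝ) (hef : e < f) :
    TensorData (Set.Ici x) (Set.Ico e f) (Set.Ico (x + e) (x + f)) := by
  constructor
  · intro s s' hs hs'
    exact le_min (Set.mem_Ici.mp hs) (Set.mem_Ici.mp hs')
  · intro t t' ht ht'
    exact ⟨le_min ht.1 ht'.1, lt_of_le_of_lt (min_le_left _ _) ht.2⟩
  · intro r p q hpq hp1 hp2 hq hrK
    have h1 : x ≤ q.1.1 := le_trans hp1 hpq.1
    have h2 : e ≤ q.1.2 := le_trans hp2.1 hpq.2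
    have h3 : q.1.1 + q.1.2 ≤ r := q.2
    have h4 : r < x + f := hrK.2
    exact hq ⟨h1, h2, by linarith⟩
  · intro r hr
    exact ⟨⟨(x, e), hr.1⟩, le_refl x, le_refl e, hef⟩
  · intro r hr p hp1 hp2
    have h1 : x + e ≤ r := le_trans (add_le_add hp1 hp2.1) p.2
    have h2 : x + f ≤ r := by
      by_contra h
      exact hr ⟨h1, lt_of_not_ge h⟩
    have hp2' : p.1.2 < f := hp2.2
    refine ⟨⟨(x, p.1.2), le_trans (add_le_add_left hp1 _) p.2⟩,
      ⟨(x, r - x), by dsimp only; linarith⟩, ⟨hp1, le_refl _⟩,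
      ⟨le_refl _, show p.1.2 ≤ r - x by linarith⟩,
      le_refl x, hp2, fun hmem => ?_⟩
    have h5 : r - x < f := hmem.2.2
    linarith
  · intro r r' hrr' hr' p hp1 hp2
    exact ⟨le_trans (add_le_add hp1 hp2.1) p.2, lt_of_le_of_lt hrr' hr'.2⟩

lemma tensorData_Ici_Iio (x f : ℝ) :
    TensorData (Set.Ici x) (Set.Iio f) (Set.Iio (x + f)) := by
  constructor
  · intro s s' hs hs'
    exact le_min (Set.mem_Ici.mp hs) (Set.mem_Ici.mp hs')
  · intro t t' ht ht'
    show min t t' < f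
    exact lt_of_le_of_lt (min_le_left t t') ht
  · intro r p q hpq hp1 hp2 hq hrK
    have h1 : x ≤ q.1.1 := le_trans hp1 hpq.1
    have h3 : q.1.1 + q.1.2 ≤ r := q.2
    have h4 : r < x + f := hrK
    exact hq ⟨h1, show q.1.2 < f by linarith⟩
  · intro r hr
    have hr' : r < x + f := hr
    refine ⟨⟨(x, r - x), by dsimp only; linarith⟩, le_refl x, ?_⟩
    show r - x < f
    linarith
  · intro r hr p hp1 hp2
    have h2 : x + f ≤ r := not_lt.mp hr
    have hp2' : p.1.2 < f := hp2
    refine ⟨⟨(x, p.1.2), le_trans (add_le_add_left hp1 _) p.2⟩,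
      ⟨(x, r - x), by dsimp only; linarith⟩, ⟨hp1, le_refl _⟩,
      ⟨le_refl _, show p.1.2 ≤ r - x by linarith⟩,
      le_refl x, hp2, fun hmem => ?_⟩
    have h5 : r - x < f := hmem.2
    linarith
  · intro r r' hrr' hr' p hp1 hp2
    exact lt_of_le_of_lt hrr' hr'

lemma tensorData_Ici_Ici (x e : ℝ) :
    TensorData (Set.Ici x) (Set.Ici e) (Set.Ici (x + e)) := by
  constructor
  · intro s s' hs hs'
    exact le_min (Set.mem_Ici.mp hs) (Set.mem_Ici.mp hs')
  · intro t t' ht ht'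
    exact le_min (Set.mem_Ici.mp ht) (Set.mem_Ici.mp ht')
  · intro r p q hpq hp1 hp2 hq _
    exact hq ⟨le_trans hp1 hpq.1, le_trans hp2 hpq.2⟩
  · intro r hr
    exact ⟨⟨(x, e), hr⟩, le_refl x, le_refl e⟩
  · intro r hr p hp1 hp2
    exact absurd (le_trans (add_le_add hp1 hp2) p.2) hr
  · intro r r' hrr' hr' p hp1 hp2
    exact le_trans (add_le_add hp1 hp2) p.2

end DataSection
open CategoryTheory Limits in
/-- First graded Tor of interval modules, computed as the kernel of the map obtained by
tensoring the projective resolution `0 → k[b,∞) → k[a,∞) → k[a,b) → 0` with the second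
module: `Tor₁(k[a,b), k[c,d)) ≅ k[max{a+d,b+c}, b+d)`,
`Tor₁(k[a,b), k(−∞,d)) ≅ k[a+d, b+d)`, and `Tor₁(k[a,∞), k[c,d)) = 0` (the latter
computed from the resolution `0 → k[d,∞) → k[c,∞) → k[c,d) → 0` of the second module). -/
theorem grTor_interval (k : Type) [Field k] (a b c d : ℝ) (hab : a < b) (hcd : c < d) :
    Nonempty
      (kernel (grTensorMapLeft k
          (intervalHom k (Set.Ici b) (Set.Ici a)
            (.of_ordConnected Set.ordConnected_Ici) (.of_ordConnected Set.ordConnected_Ici)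
            (fun x y hxy hx _ => iff_of_true (hx.trans hxy) (le_trans hab.le hx)))
          (intervalModule k (Set.Ico c d) (.of_ordConnected Set.ordConnected_Ico))) ≅
        intervalModule k (Set.Ico (max (a + d) (b + c)) (b + d))
          (.of_ordConnected Set.ordConnected_Ico)) ∧
    Nonempty
      (kernel (grTensorMapLeft k
          (intervalHom k (Set.Ici b) (Set.Ici a)
            (.of_ordConnected Set.ordConnected_Ici) (.of_ordConnected Set.ordConnected_Ici)
            (fun x y hxy hx _ => iff_of_true (hx.trans hxy) (le_trans hab.le hx)))
          (intervalModule k (Set.Iio d) (.of_ordConnected Set.ordConnected_Iio))) ≅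
        intervalModule k (Set.Ico (a + d) (b + d))
          (.of_ordConnected Set.ordConnected_Ico)) ∧
    IsZero
      (kernel (grTensorMapRight k
        (intervalModule k (Set.Ici a) (.of_ordConnected Set.ordConnected_Ici))
        (intervalHom k (Set.Ici d) (Set.Ici c)
          (.of_ordConnected Set.ordConnected_Ici) (.of_ordConnected Set.ordConnected_Ici)
          (fun x y hxy hx _ => iff_of_true (hx.trans hxy) (le_trans hcd.le hx))))) := by
  refine ⟨⟨?_⟩, ⟨?_⟩, ?_⟩
  · exact KernelFork.mapIsoOfIsLimit (kernelIsKernel _)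
      (intervalKernelIsLimit k (Set.Ico (b + c) (b + d)) (Set.Ico (a + c) (a + d))
        (Set.Ico (max (a + d) (b + c)) (b + d))
        (.of_ordConnected Set.ordConnected_Ico)
        (.of_ordConnected Set.ordConnected_Ico)
        (.of_ordConnected Set.ordConnected_Ico)
        (fun x y hxy hx hy => iff_of_true
          ⟨le_trans hx.1 hxy, lt_of_lt_of_le hy.2 (show a + d ≤ b + d by linarith)⟩
          ⟨le_trans (by linarith : a + c ≤ b + c) hx.1, lt_of_le_of_lt hxy hy.2⟩)
        (fun x y hxy hx hy => iff_of_true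
          ⟨le_trans hx.1 hxy, hy.2⟩
          ⟨le_trans (le_max_right _ _) hx.1, hx.2⟩)
        (fun r => ⟨fun h => ⟨⟨le_trans (le_max_right _ _) h.1, h.2⟩,
            fun hk' => absurd hk'.2 (not_lt.mpr (le_trans (le_max_left _ _) h.1))⟩,
          fun h => ⟨max_le (not_lt.mp (fun hlt => h.2 ⟨by linarith [h.1.1], hlt⟩)) h.1.1,
            h.1.2⟩⟩))
      (Arrow.isoMk
        (tensorIntervalIso k (Set.Ici b) (Set.Ico c d) (Set.Ico (b + c) (b + d))
          (.of_ordConnected Set.ordConnected_Ici) (.of_ordConnected Set.ordConnected_Ico)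
          (.of_ordConnected Set.ordConnected_Ico) (tensorData_Ici_Ico b c d hcd))
        (tensorIntervalIso k (Set.Ici a) (Set.Ico c d) (Set.Ico (a + c) (a + d))
          (.of_ordConnected Set.ordConnected_Ici) (.of_ordConnected Set.ordConnected_Ico)
          (.of_ordConnected Set.ordConnected_Ico) (tensorData_Ici_Ico a c d hcd))
        ((square_left k (Set.Ici b) (Set.Ici a) (Set.Ico c d) (Set.Ico (b + c) (b + d))
          (Set.Ico (a + c) (a + d)) _ _ _ _ _ (tensorData_Ici_Ico b c d hcd)
          (tensorData_Ici_Ico a c d hcd) _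
          (fun x y hxy hx hy => iff_of_true
          ⟨le_trans hx.1 hxy, lt_of_lt_of_le hy.2 (show a + d ≤ b + d by linarith)⟩
          ⟨le_trans (by linarith : a + c ≤ b + c) hx.1, lt_of_le_of_lt hxy hy.2⟩)
          (fun x hx => le_trans hab.le hx)
          (fun {r s t} hs ht hst hr =>
            ⟨le_trans (add_le_add (show b ≤ s from hs) (show c ≤ t from ht.1)) hst,
              lt_of_lt_of_le (show r < a + d from hr.2) (show a + d ≤ b + d by linarith)⟩)).symm))
  · exact KernelFork.mapIsoOfIsLimit (kernelIsKernel _)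
      (intervalKernelIsLimit k (Set.Iio (b + d)) (Set.Iio (a + d))
        (Set.Ico (a + d) (b + d))
        (.of_ordConnected Set.ordConnected_Iio)
        (.of_ordConnected Set.ordConnected_Iio)
        (.of_ordConnected Set.ordConnected_Ico)
        (fun x y hxy hx hy => iff_of_true
          (lt_of_lt_of_le hy (show a + d ≤ b + d by linarith)) (lt_of_le_of_lt hxy hy))
        (fun x y hxy hx hy => iff_of_true ⟨le_trans hx.1 hxy, hy⟩ hx.2)
        (fun r => ⟨fun h => ⟨h.2, not_lt.mpr h.1⟩, fun h => ⟨not_lt.mp h.2, h.1⟩⟩))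
      (Arrow.isoMk
        (tensorIntervalIso k (Set.Ici b) (Set.Iio d) (Set.Iio (b + d))
          (.of_ordConnected Set.ordConnected_Ici) (.of_ordConnected Set.ordConnected_Iio)
          (.of_ordConnected Set.ordConnected_Iio) (tensorData_Ici_Iio b d))
        (tensorIntervalIso k (Set.Ici a) (Set.Iio d) (Set.Iio (a + d))
          (.of_ordConnected Set.ordConnected_Ici) (.of_ordConnected Set.ordConnected_Iio)
          (.of_ordConnected Set.ordConnected_Iio) (tensorData_Ici_Iio a d))
        ((square_left k (Set.Ici b) (Set.Ici a) (Set.Iio d) (Set.Iio (b + d))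
          (Set.Iio (a + d)) _ _ _ _ _ (tensorData_Ici_Iio b d) (tensorData_Ici_Iio a d) _
          (fun x y hxy hx hy => iff_of_true
          (lt_of_lt_of_le hy (show a + d ≤ b + d by linarith)) (lt_of_le_of_lt hxy hy))
          (fun x hx => le_trans hab.le hx)
          (fun {r s t} hs ht hst hr => lt_of_lt_of_le hr (show a + d ≤ b + d by linarith))).symm))
  · have hEmpty : IsConvexSet (∅ : Set ℝ) :=
      fun x y z hx hz hxy hyz => absurd hx (Set.notMem_empty x)
    exact (intervalModule_empty_isZero k hEmpty).of_iso
      (KernelFork.mapIsoOfIsLimit (kernelIsKernel _)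
        (intervalKernelIsLimit k (Set.Ici (a + d)) (Set.Ici (a + c)) (∅ : Set ℝ)
          (.of_ordConnected Set.ordConnected_Ici)
          (.of_ordConnected Set.ordConnected_Ici)
          hEmpty
          (fun x y hxy hx hy => iff_of_true (le_trans hx hxy)
            (le_trans (by linarith : a + c ≤ a + d) hx))
          (fun x y hxy hx hy => absurd hx (Set.notMem_empty x))
          (fun r => iff_of_false (Set.notMem_empty r)
            (fun h => h.2 (le_trans (by linarith : a + c ≤ a + d) h.1))))
        (Arrow.isoMk
          (tensorIntervalIso k (Set.Ici a) (Set.Ici d) (Set.Ici (a + d))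
            (.of_ordConnected Set.ordConnected_Ici) (.of_ordConnected Set.ordConnected_Ici)
            (.of_ordConnected Set.ordConnected_Ici) (tensorData_Ici_Ici a d))
          (tensorIntervalIso k (Set.Ici a) (Set.Ici c) (Set.Ici (a + c))
            (.of_ordConnected Set.ordConnected_Ici) (.of_ordConnected Set.ordConnected_Ici)
            (.of_ordConnected Set.ordConnected_Ici) (tensorData_Ici_Ici a c))
          ((square_right k (Set.Ici a) (Set.Ici d) (Set.Ici c) (Set.Ici (a + d))
            (Set.Ici (a + c)) _ _ _ _ _ (tensorData_Ici_Ici a d) (tensorData_Ici_Ici a c) _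
            (fun x y hxy hx hy => iff_of_true (le_trans hx hxy)
            (le_trans (by linarith : a + c ≤ a + d) hx))
            (fun x hx => le_trans hcd.le hx)
            (fun {r s t} hs ht hst hr => le_trans (add_le_add hs ht) hst)).symm)))
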